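/- Let M be a compact metric space and F : M ⊸ M a positively expansive, Hausdorff-continuous set-valued map with compact values and expansivity constant α > 0. Then for every δ > 0 there exists n₀ ∈ ℕ such that for all x, y ∈ M with dist(x,y) ≥ δ, there exists j with 0 ≤ j ≤ n₀ and d_H(Fʲ(x), Fʲ(y)) ≥ α. -/

import Mathlib

open Metric TopologicalSpace

/-- Iterates of a set-valued map `F` applied to a set. -/
noncomputable def iterS {M : Type*} (F : M → Set M) : ℕ → Set M → Set M
  | 0, K => K
  | n + 1, K => ⋃ y ∈ iterS F n K, F y

section aux

variable {M : Type*} [MetricSpace M] [CompactSpace M]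

lemma iterS_nonempty (F : M → NonemptyCompacts M) (n : ℕ) (x : M) :
    (iterS (fun z => (F z : Set M)) n {x}).Nonempty := by
  induction n with
  | zero => exact ⟨x, rfl⟩
  | succ n ih =>
    obtain ⟨y, hy⟩ := ih
    obtain ⟨z, hz⟩ := (F y).nonempty
    exact ⟨z, Set.mem_biUnion hy hz⟩

lemma hEdistNeTop (s t : Set M) (hs : s.Nonempty) (ht : t.Nonempty) :
    EMetric.hausdorffEdist s t ≠ ⊤ :=
  Metric.hausdorffEdist_ne_top_of_nonempty_of_bounded hs ht
    (Bornology.IsBounded.subset (isCompact_univ.isBounded) (Set.subset_univ s))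
    (Bornology.IsBounded.subset (isCompact_univ.isBounded) (Set.subset_univ t))

/-- uniform continuity of the iterates -/
lemma iter_unif (F : M → NonemptyCompacts M) (hF : Continuous F) (n : ℕ) :
    ∀ ε : ℝ, 0 < ε → ∃ η : ℝ, 0 < η ∧ ∀ x y : M, dist x y < η →
      hausdorffDist (iterS (fun z => (F z : Set M)) n {x})
        (iterS (fun z => (F z : Set M)) n {y}) ≤ ε := by
  induction n with
  | zero =>
    intro ε hε
    refine ⟨ε, hε, fun x y hxy => ?_⟩
    have h1 : hausdorffDist ({x} : Set M) {y} ≤ dist x y := by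
      apply hausdorffDist_le_of_infDist dist_nonneg
      · intro a ha; simp only [Set.mem_singleton_iff] at ha; subst ha
        simp [infDist_singleton]
      · intro a ha; simp only [Set.mem_singleton_iff] at ha; subst ha
        simp [infDist_singleton, dist_comm]
    calc hausdorffDist (iterS (fun z => (F z : Set M)) 0 {x})
          (iterS (fun z => (F z : Set M)) 0 {y}) = hausdorffDist ({x} : Set M) {y} := rfl
      _ ≤ dist x y := h1
      _ ≤ ε := hxy.le
  | succ n ih =>
    intro ε hε
    -- uniform continuity of F
    have hUC : UniformContinuous F := CompactSpace.uniformContinuous_of_continuous hF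
    obtain ⟨η₁, hη₁, hFη⟩ := Metric.uniformContinuous_iff.1 hUC ε hε
    obtain ⟨η, hη, hiter⟩ := ih (η₁ / 2) (by linarith)
    refine ⟨η, hη, fun x y hxy => ?_⟩
    set A := iterS (fun z => (F z : Set M)) n {x} with hA
    set B := iterS (fun z => (F z : Set M)) n {y} with hB
    have hAne : A.Nonempty := iterS_nonempty F n x
    have hBne : B.Nonempty := iterS_nonempty F n y
    have hfin : EMetric.hausdorffEdist A B ≠ ⊤ := hEdistNeTop A B hAne hBne
    have hAB : hausdorffDist A B < η₁ := lt_of_le_of_lt (hiter x y hxy) (by linarith)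
    have key : ∀ (S T : Set M), S.Nonempty → T.Nonempty →
        EMetric.hausdorffEdist S T ≠ ⊤ → hausdorffDist S T < η₁ →
        ∀ z ∈ ⋃ a ∈ S, (F a : Set M), infDist z (⋃ b ∈ T, (F b : Set M)) ≤ ε := by
      intro S T hSne hTne hfin' hST z hz
      obtain ⟨a, haS, hza⟩ := Set.mem_iUnion₂.1 hz
      obtain ⟨b, hbT, hab⟩ := exists_dist_lt_of_hausdorffDist_lt haS hST hfin'
      have h1 : hausdorffDist (F a : Set M) (F b : Set M) < ε := by
        have := hFη hab
        rwa [NonemptyCompacts.dist_eq] at this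
      have h2 : infDist z (F b : Set M) ≤ hausdorffDist (F a : Set M) (F b : Set M) :=
        infDist_le_hausdorffDist_of_mem hza
          (hEdistNeTop _ _ (F a).nonempty (F b).nonempty)
      have h3 : infDist z (⋃ b' ∈ T, (F b' : Set M)) ≤ infDist z (F b : Set M) :=
        infDist_le_infDist_of_subset
          (Set.subset_biUnion_of_mem (u := fun b' => (F b' : Set M)) hbT) (F b).nonempty
      linarith
    have hfin' : EMetric.hausdorffEdist B A ≠ ⊤ := by
      show hausdorffEDist B A ≠ ⊤
      rw [EMetric.hausdorffEdist_comm]; exact hfin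
    have hBA : hausdorffDist B A < η₁ := by rwa [hausdorffDist_comm]
    simp only [iterS, ← hA, ← hB]
    exact hausdorffDist_le_of_infDist hε.le
      (key A B hAne hBne hfin hAB)
      (fun z hz => key B A hBne hAne hfin' hBA z hz)

end aux

/-- for a positively expansive Hausdorff-continuous set-valued map with
expansivity constant `α`, points at distance at least `δ` are `α`-separated (in the
Hausdorff metric of iterates) within a uniformly bounded number of iterates. -/
theorem stmt8 {M : Type*} [MetricSpace M] [CompactSpace M]
    (F : M → NonemptyCompacts M) (hF : Continuous F) (α : ℝ) (hα : 0 < α)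
    (hexp : ∀ x y : M, x ≠ y → ∃ n : ℕ,
      α < hausdorffDist (iterS (fun z => (F z : Set M)) n {x})
            (iterS (fun z => (F z : Set M)) n {y})) :
    ∀ δ : ℝ, 0 < δ → ∃ n₀ : ℕ, ∀ x y : M, δ ≤ dist x y →
      ∃ j ≤ n₀, α ≤ hausdorffDist (iterS (fun z => (F z : Set M)) j {x})
            (iterS (fun z => (F z : Set M)) j {y}) := by
  intro δ hδ
  by_contra hcon
  push_neg at hcon
  -- for each n, points u n, v n at distance ≥ δ with all iterates up to n closer than α
  have hcon' : ∀ n : ℕ, ∃ u v : M, δ ≤ dist u v ∧ ∀ j ≤ n,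
      hausdorffDist (iterS (fun z => (F z : Set M)) j {u})
        (iterS (fun z => (F z : Set M)) j {v}) < α := by
    intro n
    obtain ⟨u, v, huv, h⟩ := hcon n
    exact ⟨u, v, huv, fun j hj => by
      have := h j hj
      linarith [this]⟩
  choose u v huv hsep using hcon'
  -- extract convergent subsequences
  obtain ⟨x, -, φ, hφ, hux⟩ := isCompact_univ.tendsto_subseq (x := u) (fun n => Set.mem_univ _)
  obtain ⟨y, -, ψ, hψ, hvy⟩ := isCompact_univ.tendsto_subseq (x := v ∘ φ) (fun n => Set.mem_univ _)
  have hux' : Filter.Tendsto (u ∘ φ ∘ ψ) Filter.atTop (nhds x) :=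
    hux.comp hψ.tendsto_atTop
  set σ : ℕ → ℕ := φ ∘ ψ with hσ
  have hσmono : StrictMono σ := hφ.comp hψ
  have hdxy : δ ≤ dist x y := by
    have : Filter.Tendsto (fun k => dist (u (σ k)) (v (σ k))) Filter.atTop
        (nhds (dist x y)) := (hux'.dist hvy)
    exact le_of_tendsto_of_tendsto' tendsto_const_nhds this (fun k => huv (σ k))
  have hxy : x ≠ y := by
    intro h
    rw [h, dist_self] at hdxy
    linarith
  obtain ⟨n, hn⟩ := hexp x y hxy
  set D := hausdorffDist (iterS (fun z => (F z : Set M)) n {x})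
      (iterS (fun z => (F z : Set M)) n {y}) with hD
  set ε := (D - α) / 3 with hε
  have hεpos : 0 < ε := by rw [hε]; linarith
  obtain ⟨η, hη, hiter⟩ := iter_unif F hF n ε hεpos
  -- find k large
  obtain ⟨N₁, hN₁⟩ := Metric.tendsto_atTop.1 hux' η hη
  obtain ⟨N₂, hN₂⟩ := Metric.tendsto_atTop.1 hvy η hη
  set k := max (max N₁ N₂) n with hk
  have hk1 : dist (u (σ k)) x < η := hN₁ k (le_trans (le_max_left _ _) (le_max_left _ _))
  have hk2 : dist (v (σ k)) y < η := hN₂ k (le_trans (le_max_right _ _) (le_max_left _ _))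
  have hnk : n ≤ σ k := le_trans (le_max_right _ _) (hσmono.le_apply)
  have hmid := hsep (σ k) n hnk
  set A := iterS (fun z => (F z : Set M)) n {x}
  set B := iterS (fun z => (F z : Set M)) n {u (σ k)}
  set C := iterS (fun z => (F z : Set M)) n {v (σ k)}
  set E := iterS (fun z => (F z : Set M)) n {y}
  have hAB : hausdorffDist A B ≤ ε := by
    have := hiter x (u (σ k)) (by rwa [dist_comm])
    exact this
  have hCE : hausdorffDist C E ≤ ε := hiter (v (σ k)) y hk2
  have finAB : EMetric.hausdorffEdist A B ≠ ⊤ :=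
    hEdistNeTop _ _ (iterS_nonempty F n x) (iterS_nonempty F n _)
  have finBC : EMetric.hausdorffEdist B C ≠ ⊤ :=
    hEdistNeTop _ _ (iterS_nonempty F n _) (iterS_nonempty F n _)
  have finCE : EMetric.hausdorffEdist C E ≠ ⊤ :=
    hEdistNeTop _ _ (iterS_nonempty F n _) (iterS_nonempty F n _)
  have t1 : hausdorffDist A E ≤ hausdorffDist A B + hausdorffDist B E :=
    hausdorffDist_triangle finAB
  have t2 : hausdorffDist B E ≤ hausdorffDist B C + hausdorffDist C E :=
    hausdorffDist_triangle finBC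
  have hDle : D ≤ ε + (α + ε) := by
    have : hausdorffDist A E = D := rfl
    linarith [t1, t2, hAB, hCE, hmid.le]
  have : D < D := by
    have : ε + (α + ε) < D := by rw [hε] at *; linarith
    linarith [hDle]
  exact lt_irrefl _ this
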